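/- Let ξ ∈ (0, π), φ ∈ ℝ, and let E be the L×K matrix with entries E[i,j] = cos(ξ(i+j) + φ), 0 ≤ i < L, 0 ≤ j < K. Then the spectral norm of EEᵀ satisfies ‖EEᵀ‖ ≤ LK/2 + L·|sin(Kξ)|/(2 sin ξ). -/

import Mathlib

open Matrix

lemma sum_cos_mul (ξ θ : ℝ) (K : ℕ) :
    (∑ k ∈ Finset.range K, Real.cos (θ + 2*k*ξ)) * Real.sin ξ
      = Real.sin (K*ξ) * Real.cos (θ + ((K:ℝ)-1)*ξ) := by
  induction K with
  | zero => simp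
  | succ n ih =>
    rw [Finset.sum_range_succ, add_mul, ih]
    push_cast
    have e1 : ((n:ℝ)+1)*ξ = ↑n*ξ+ξ := by ring
    have e2 : θ + ((n:ℝ)+1-1)*ξ = (θ + ↑n*ξ) := by ring
    have e3 : θ + 2*(n:ℝ)*ξ = (θ + ↑n*ξ) + ↑n*ξ := by ring
    have e4 : θ + ((n:ℝ)-1)*ξ = (θ + ↑n*ξ) - ξ := by ring
    rw [e1, e2, e3, e4, Real.sin_add, Real.cos_add, Real.cos_sub]
    ring

/-- The spectral (ℓ²-operator) norm of a matrix. -/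
noncomputable def specNorm {m n : ℕ} (A : Matrix (Fin m) (Fin n) ℝ) : ℝ :=
  ‖(Matrix.toEuclideanLin A).toContinuousLinearMap‖

lemma specNorm_le_of_entry_bound {L : ℕ} (A : Matrix (Fin L) (Fin L) ℝ) (c : ℝ) (hc : 0 ≤ c)
    (h : ∀ i j, |A i j| ≤ c) : specNorm A ≤ L * c := by
  unfold specNorm
  apply ContinuousLinearMap.opNorm_le_bound _ (by positivity)
  intro x
  have hyi : ∀ i, (Matrix.toEuclideanLin A x) i = ∑ j, A i j * x j := fun i => rfl
  have hx2 : ‖x‖ ^ 2 = ∑ j, ‖x j‖ ^ 2 := by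
    rw [EuclideanSpace.norm_eq, Real.sq_sqrt (by positivity)]
  have habs : (∑ j, |x j|) ≤ Real.sqrt L * ‖x‖ := by
    have h1 : (∑ j, |x j|) ^ 2 ≤ (L : ℝ) * ∑ j, |x j| ^ 2 := by
      simpa using sq_sum_le_card_mul_sum_sq (s := (Finset.univ : Finset (Fin L)))
        (f := fun j => |x j|)
    have h2 : (∑ j, |x j| ^ 2) = ‖x‖ ^ 2 := by
      rw [hx2]; simp [Real.norm_eq_abs]
    have h3 : (∑ j, |x j|) ^ 2 ≤ (Real.sqrt L * ‖x‖) ^ 2 := by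
      rw [mul_pow, Real.sq_sqrt (Nat.cast_nonneg L)]
      rw [h2] at h1; exact h1
    have h4 : (0:ℝ) ≤ ∑ j, |x j| := Finset.sum_nonneg fun j _ => abs_nonneg _
    nlinarith [Real.sqrt_nonneg (L:ℝ), norm_nonneg x,
      mul_nonneg (Real.sqrt_nonneg (L:ℝ)) (norm_nonneg x)]
  have hrow : ∀ i, |(Matrix.toEuclideanLin A x) i| ≤ c * (Real.sqrt L * ‖x‖) := by
    intro i
    rw [hyi]
    calc |∑ j, A i j * x j| ≤ ∑ j, |A i j * x j| := Finset.abs_sum_le_sum_abs _ _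
      _ ≤ ∑ j, c * |x j| := Finset.sum_le_sum fun j _ => by
            rw [abs_mul]; exact mul_le_mul_of_nonneg_right (h i j) (abs_nonneg _)
      _ = c * ∑ j, |x j| := by rw [Finset.mul_sum]
      _ ≤ c * (Real.sqrt L * ‖x‖) := mul_le_mul_of_nonneg_left habs hc
  have hnn : (0:ℝ) ≤ c * (Real.sqrt L * ‖x‖) := by positivity
  rw [show ((Matrix.toEuclideanLin A).toContinuousLinearMap x) = Matrix.toEuclideanLin A x from rfl,
    EuclideanSpace.norm_eq]
  calc Real.sqrt (∑ i, ‖(Matrix.toEuclideanLin A x) i‖ ^ 2)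
      ≤ Real.sqrt (∑ i : Fin L, (c * (Real.sqrt L * ‖x‖)) ^ 2) := by
        apply Real.sqrt_le_sqrt
        apply Finset.sum_le_sum
        intro i _
        have := hrow i
        rw [Real.norm_eq_abs]
        nlinarith [abs_nonneg ((Matrix.toEuclideanLin A x) i)]
    _ = Real.sqrt ((L : ℝ) * (c * (Real.sqrt L * ‖x‖)) ^ 2) := by
        rw [Finset.sum_const, Finset.card_univ, Fintype.card_fin, nsmul_eq_mul]
    _ ≤ (L : ℝ) * c * ‖x‖ := by
        rcases Nat.eq_zero_or_pos L with hL | hL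
        · simp [hL]
        · have hs : Real.sqrt L ^ 2 = (L:ℝ) := Real.sq_sqrt (Nat.cast_nonneg L)
          rw [show (L:ℝ) * (c * (Real.sqrt L * ‖x‖))^2 = ((L:ℝ) * c * ‖x‖)^2 from by
              rw [mul_pow, mul_pow, hs]; ring]
          rw [Real.sqrt_sq (by positivity)]

/-- spectral-norm bound for `EEᵀ`, where `E` is the Hankel matrix
of the harmonic noise `cos(ξn + φ)`. -/
theorem stmt_10 (ξ φ : ℝ) (hξ : ξ ∈ Set.Ioo 0 Real.pi) (L K : ℕ)
    (E : Matrix (Fin L) (Fin K) ℝ)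
    (hE : ∀ (i : Fin L) (j : Fin K), E i j = Real.cos (ξ * (((i : ℕ) + (j : ℕ) : ℕ) : ℝ) + φ)) :
    specNorm (E * Eᵀ) ≤
      (L : ℝ) * (K : ℝ) / 2 + (L : ℝ) * |Real.sin ((K : ℝ) * ξ)| / (2 * Real.sin ξ) := by
  have hs : 0 < Real.sin ξ := Real.sin_pos_of_pos_of_lt_pi hξ.1 hξ.2
  set c : ℝ := (K:ℝ)/2 + |Real.sin ((K:ℝ)*ξ)| / (2 * Real.sin ξ) with hc_def
  have hc : 0 ≤ c := by positivity
  have key : ∀ i j : Fin L, |(E * Eᵀ) i j| ≤ c := by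
    intro i j
    set θ : ℝ := ξ * ((i:ℕ) + (j:ℕ)) + 2*φ with hθ
    have hprod : ∀ A B : ℝ, Real.cos A * Real.cos B
        = (Real.cos (A - B) + Real.cos (A + B)) / 2 := fun A B => by
      rw [Real.cos_sub, Real.cos_add]; ring
    have h1 : (E * Eᵀ) i j
        = ((K:ℝ) * Real.cos (ξ * ((i:ℕ) - (j:ℕ)))
            + ∑ k ∈ Finset.range K, Real.cos (θ + 2*k*ξ)) / 2 := by
      simp only [Matrix.mul_apply, Matrix.transpose_apply, hE]
      rw [show (∑ k : Fin K, Real.cos (ξ * (((i:ℕ) + (k:ℕ) : ℕ):ℝ) + φ)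
            * Real.cos (ξ * (((j:ℕ) + (k:ℕ) : ℕ):ℝ) + φ))
          = ∑ k ∈ Finset.range K, Real.cos (ξ * (((i:ℕ):ℝ) + (k:ℝ)) + φ)
            * Real.cos (ξ * (((j:ℕ):ℝ) + (k:ℝ)) + φ) from by
        rw [← Fin.sum_univ_eq_sum_range]; push_cast; rfl]
      have hterm : ∀ k : ℕ, Real.cos (ξ * (((i:ℕ):ℝ) + (k:ℝ)) + φ)
            * Real.cos (ξ * (((j:ℕ):ℝ) + (k:ℝ)) + φ)
          = (Real.cos (ξ * ((i:ℕ) - (j:ℕ))) + Real.cos (θ + 2*k*ξ)) / 2 := by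
        intro k
        rw [hprod]
        congr 2
        · ring
        · rw [hθ]; ring
      rw [Finset.sum_congr rfl fun k _ => hterm k, ← Finset.sum_div,
        Finset.sum_add_distrib, Finset.sum_const, Finset.card_range, nsmul_eq_mul]
    have hS : |∑ k ∈ Finset.range K, Real.cos (θ + 2*k*ξ)|
        ≤ |Real.sin ((K:ℝ)*ξ)| / Real.sin ξ := by
      have hm := sum_cos_mul ξ θ K
      have heq : (∑ k ∈ Finset.range K, Real.cos (θ + 2*k*ξ))
          = Real.sin ((K:ℝ)*ξ) * Real.cos (θ + ((K:ℝ)-1)*ξ) / Real.sin ξ := by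
        rw [eq_div_iff hs.ne']
        exact hm
      rw [heq, abs_div, abs_of_pos hs, abs_mul]
      exact (div_le_div_iff_of_pos_right hs).mpr
        (mul_le_of_le_one_right (abs_nonneg _) (Real.abs_cos_le_one _))
    rw [h1, abs_div, abs_of_nonneg (by norm_num : (0:ℝ) ≤ 2)]
    have : |(K:ℝ) * Real.cos (ξ * ((i:ℕ) - (j:ℕ)))
        + ∑ k ∈ Finset.range K, Real.cos (θ + 2*k*ξ)|
        ≤ (K:ℝ) + |Real.sin ((K:ℝ)*ξ)| / Real.sin ξ := by
      calc _ ≤ |(K:ℝ) * Real.cos (ξ * ((i:ℕ) - (j:ℕ)))|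
            + |∑ k ∈ Finset.range K, Real.cos (θ + 2*k*ξ)| := abs_add_le _ _
        _ ≤ (K:ℝ) + |Real.sin ((K:ℝ)*ξ)| / Real.sin ξ := by
            apply add_le_add _ hS
            rw [abs_mul, Nat.abs_cast]
            calc (K:ℝ) * |Real.cos (ξ * ((i:ℕ) - (j:ℕ)))| ≤ (K:ℝ) * 1 :=
                mul_le_mul_of_nonneg_left (Real.abs_cos_le_one _) (Nat.cast_nonneg K)
              _ = (K:ℝ) := mul_one _
    calc _ ≤ ((K:ℝ) + |Real.sin ((K:ℝ)*ξ)| / Real.sin ξ) / 2 := by linarith [this]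
      _ = c := by rw [hc_def]; field_simp
  have := specNorm_le_of_entry_bound (E * Eᵀ) c hc key
  calc specNorm (E * Eᵀ) ≤ (L:ℝ) * c := this
    _ = (L : ℝ) * (K : ℝ) / 2 + (L : ℝ) * |Real.sin ((K : ℝ) * ξ)| / (2 * Real.sin ξ) := by
        rw [hc_def]; field_simp
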